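/- Let d ≥ 1 and let V be a finite-dimensional ℂ-subspace of the space of functions from ℝ^d to ℂ that is translation invariant (for every h ∈ ℝ^d and g ∈ V, the function x ↦ g(x + h) lies in V). For y ∈ ℝ^d let T_y : V → V denote the linear endomorphism of V induced by translation, T_y(g) = (x ↦ g(x + y)), and let N = dim V. Then for all y, z ∈ ℝ^d there exist λ, μ : Fin N → ℂ such that the characteristic polynomial of T_y equals ∏_i (X − λ(i)), the characteristic polynomial of T_z equals ∏_i (X − μ(i)), and the characteristic polynomial of T_{y+z} equals ∏_i (X − λ(i)·μ(i)). -/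

import Mathlib

open Polynomial Module LinearMap

namespace CharpolyTranslationAux

/-- Characteristic polynomial of a matrix shifted by a scalar multiple of the identity. -/
lemma matrix_charpoly_sub_smul_one {m : Type*} [Fintype m] [DecidableEq m]
    (M : Matrix m m ℂ) (c : ℂ) :
    (M - c • 1).charpoly = (M.charpoly).comp (X + C c) := by
  let φ : ℂ[X] →+* ℂ[X] := (aeval (R := ℂ) (X + C c)).toRingHom
  have h1 : ∀ p : ℂ[X], p.comp (X + C c) = φ p := by
    intro p
    simp [φ, aeval_def, eval₂_def, Polynomial.comp]
  rw [Matrix.charpoly, Matrix.charpoly, h1, φ.map_det]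
  rw [show φ.mapMatrix M.charmatrix = M.charmatrix.map φ from rfl]
  congr 1
  ext i j
  by_cases h : i = j
  · subst h
    simp [φ, Matrix.charmatrix_apply_eq, Matrix.sub_apply, Matrix.smul_apply, Matrix.one_apply]
    ring
  · simp [φ, Matrix.charmatrix_apply_ne _ _ _ h, Matrix.sub_apply, Matrix.smul_apply,
      Matrix.one_apply, h]

variable {V : Type} [AddCommGroup V] [Module ℂ V]

lemma charpoly_sub_smul_one [FiniteDimensional ℂ V] (f : Module.End ℂ V) (c : ℂ) :
    (f - c • 1).charpoly = (f.charpoly).comp (X + C c) := by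
  classical
  let b := Module.Free.chooseBasis ℂ V
  rw [← LinearMap.charpoly_toMatrix f b, ← LinearMap.charpoly_toMatrix (f - c • 1) b]
  have : LinearMap.toMatrix b b (f - c • 1) = LinearMap.toMatrix b b f - c • 1 := by
    rw [map_sub, map_smul]
    congr 1
    congr 1
    exact LinearMap.toMatrix_id b
  rw [this, matrix_charpoly_sub_smul_one]

lemma charpoly_of_isNilpotent_sub [FiniteDimensional ℂ V] (f : Module.End ℂ V) (c : ℂ)
    (h : IsNilpotent (f - c • 1)) :
    f.charpoly = (X - C c) ^ Module.finrank ℂ V := by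
  have h1 : (f - c • 1).charpoly = X ^ Module.finrank ℂ V :=
    h.charpoly_eq_X_pow_finrank
  have h2 := charpoly_sub_smul_one f c
  have h3 : f.charpoly = ((X : ℂ[X]) ^ Module.finrank ℂ V).comp (X - C c) := by
    calc f.charpoly = (f.charpoly.comp (X + C c)).comp (X - C c) := by
          rw [Polynomial.comp_assoc]
          simp
      _ = _ := by rw [← h2, h1]
  rw [h3, Polynomial.pow_comp, Polynomial.X_comp]

lemma restrict_mul_restrict (f g : Module.End ℂ V) {p : Submodule ℂ V}
    (hf : ∀ x ∈ p, f x ∈ p) (hg : ∀ x ∈ p, g x ∈ p) (hfg : ∀ x ∈ p, (f * g) x ∈ p) :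
    (f * g).restrict hfg = f.restrict hf * g.restrict hg := by
  refine LinearMap.ext fun x => Subtype.ext ?_
  simp [LinearMap.restrict_apply, Module.End.mul_apply]

lemma charpoly_eq_mul_of_isCompl [FiniteDimensional ℂ V] (φ : Module.End ℂ V)
    {p q : Submodule ℂ V} (hpq : IsCompl p q)
    (hp : ∀ x ∈ p, φ x ∈ p) (hq : ∀ x ∈ q, φ x ∈ q) :
    φ.charpoly = (φ.restrict hp).charpoly * (φ.restrict hq).charpoly := by
  classical
  let F := φ.restrict hp
  let G := φ.restrict hq
  let ψ := F.prodMap G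
  let e := Submodule.prodEquivOfIsCompl p q hpq
  let bp := Module.Free.chooseBasis ℂ p
  let bq := Module.Free.chooseBasis ℂ q
  let b := bp.prod bq
  have hψ : ψ = e.symm.conj φ := by
    apply b.ext
    simp only [Basis.prod_apply, coe_inl, coe_inr, prodMap_apply, LinearEquiv.conj_apply,
      LinearEquiv.symm_symm, Submodule.coe_prodEquivOfIsCompl, coe_comp, LinearEquiv.coe_coe,
      Function.comp_apply, coprod_apply, Submodule.coe_subtype, map_add, Sum.forall, Sum.elim_inl,
      map_zero, ZeroMemClass.coe_zero, add_zero, LinearEquiv.eq_symm_apply, and_self,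
      Submodule.coe_prodEquivOfIsCompl', restrict_coe_apply, implies_true, Sum.elim_inr, zero_add,
      e, ψ, F, G, b]
  rw [← e.symm.charpoly_conj φ, ← hψ, LinearMap.charpoly_prodMap]

/-- The property that the spectra (with multiplicity) of two commuting endomorphisms can be
aligned so that eigenvalues of the product multiply. -/
def Good (V : Type) [AddCommGroup V] [Module ℂ V] [FiniteDimensional ℂ V]
    (f g : Module.End ℂ V) : Prop :=
  ∃ s : Multiset (ℂ × ℂ), Multiset.card s = Module.finrank ℂ V ∧
    f.charpoly = (s.map fun r => X - C r.1).prod ∧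
    g.charpoly = (s.map fun r => X - C r.2).prod ∧
    (f * g).charpoly = (s.map fun r => X - C (r.1 * r.2)).prod

lemma Good.swap [FiniteDimensional ℂ V] {f g : Module.End ℂ V} (hc : f * g = g * f)
    (h : Good V g f) : Good V f g := by
  obtain ⟨s, h1, h2, h3, h4⟩ := h
  refine ⟨s.map Prod.swap, by simpa using h1, ?_, ?_, ?_⟩
  · rw [h3, Multiset.map_map]; rfl
  · rw [h2, Multiset.map_map]; rfl
  · rw [hc, h4, Multiset.map_map]
    congr 1
    apply Multiset.map_congr rfl
    intro r _
    simp [mul_comm]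

lemma caseA (n : ℕ)
    (ih : ∀ m, m < n → ∀ (W : Type) [AddCommGroup W] [Module ℂ W] [FiniteDimensional ℂ W],
      Module.finrank ℂ W = m → ∀ f g : Module.End ℂ W, f * g = g * f → Good W f g)
    (V : Type) [AddCommGroup V] [Module ℂ V] [FiniteDimensional ℂ V]
    (hn : Module.finrank ℂ V = n)
    (f g : Module.End ℂ V) (hc : f * g = g * f)
    (μ : ℂ) (hb : f.maxGenEigenspace μ ≠ ⊥) (ht : f.maxGenEigenspace μ ≠ ⊤) :
    Good V f g := by
  classical
  set p := f.maxGenEigenspace μ with hp_def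
  set φ := f - μ • (1 : Module.End ℂ V) with hφ_def
  have hp_eq : p = ⨆ k : ℕ, LinearMap.ker (φ ^ k) := by
    simp [hp_def, ← Module.End.iSup_genEigenspace_eq, Module.End.genEigenspace_nat, hφ_def]
  set W := ⨅ k : ℕ, LinearMap.range (φ ^ k) with hW_def
  have hcompl : IsCompl p W := by
    rw [hp_eq]
    exact LinearMap.isCompl_iSup_ker_pow_iInf_range_pow φ
  have hgf : Commute g f := hc.symm
  have hfφ : Commute f φ := (Commute.refl f).sub_right ((Commute.one_right f).smul_right μ)
  have hgφ : Commute g φ := hgf.sub_right ((Commute.one_right g).smul_right μ)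
  have hpf : ∀ x ∈ p, f x ∈ p := fun x hx =>
    Module.End.mapsTo_maxGenEigenspace_of_comm (Commute.refl f) μ hx
  have hpg : ∀ x ∈ p, g x ∈ p := fun x hx =>
    Module.End.mapsTo_maxGenEigenspace_of_comm hc μ hx
  have hpfg : ∀ x ∈ p, (f * g) x ∈ p := fun x hx => hpf _ (hpg x hx)
  have hWaux : ∀ (u : Module.End ℂ V), Commute u φ → ∀ x ∈ W, u x ∈ W := by
    intro u hu x hx
    rw [hW_def, Submodule.mem_iInf] at hx ⊢
    intro k
    obtain ⟨y, hy⟩ := hx k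
    exact ⟨u y, by rw [← Module.End.mul_apply, ← (hu.pow_right k).eq, Module.End.mul_apply, hy]⟩
  have hWf : ∀ x ∈ W, f x ∈ W := hWaux f hfφ
  have hWg : ∀ x ∈ W, g x ∈ W := hWaux g hgφ
  have hWfg : ∀ x ∈ W, (f * g) x ∈ W := fun x hx => hWf _ (hWg x hx)
  have hdim : Module.finrank ℂ p + Module.finrank ℂ W = n := by
    rw [← hn]
    exact Submodule.finrank_add_eq_of_isCompl hcompl
  have hplt : Module.finrank ℂ p < n := by
    rw [← hn]
    exact Submodule.finrank_lt ht
  have hWt : W ≠ ⊤ := by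
    intro h
    apply hb
    have := hcompl.inf_eq_bot
    rw [h, inf_top_eq] at this
    exact this
  have hWlt : Module.finrank ℂ W < n := by
    rw [← hn]
    exact Submodule.finrank_lt hWt
  have hcp : (f.restrict hpf) * (g.restrict hpg) = (g.restrict hpg) * (f.restrict hpf) := by
    refine LinearMap.ext fun x => Subtype.ext ?_
    simpa [Module.End.mul_apply, LinearMap.restrict_coe_apply] using
      DFunLike.congr_fun hc (x : V)
  have hcW : (f.restrict hWf) * (g.restrict hWg) = (g.restrict hWg) * (f.restrict hWf) := by
    refine LinearMap.ext fun x => Subtype.ext ?_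
    simpa [Module.End.mul_apply, LinearMap.restrict_coe_apply] using
      DFunLike.congr_fun hc (x : V)
  obtain ⟨s₁, hs₁, hf₁, hg₁, hfg₁⟩ := ih _ hplt p rfl (f.restrict hpf) (g.restrict hpg) hcp
  obtain ⟨s₂, hs₂, hf₂, hg₂, hfg₂⟩ := ih _ hWlt W rfl (f.restrict hWf) (g.restrict hWg) hcW
  refine ⟨s₁ + s₂, ?_, ?_, ?_, ?_⟩
  · rw [Multiset.card_add, hs₁, hs₂, hn, hdim]
  · rw [charpoly_eq_mul_of_isCompl f hcompl hpf hWf, hf₁, hf₂,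
      Multiset.map_add, Multiset.prod_add]
  · rw [charpoly_eq_mul_of_isCompl g hcompl hpg hWg, hg₁, hg₂,
      Multiset.map_add, Multiset.prod_add]
  · rw [charpoly_eq_mul_of_isCompl (f * g) hcompl hpfg hWfg,
      restrict_mul_restrict f g hpf hpg hpfg, restrict_mul_restrict f g hWf hWg hWfg,
      hfg₁, hfg₂, Multiset.map_add, Multiset.prod_add]

lemma isNilpotent_of_maxGenEigenspace_eq_top [FiniteDimensional ℂ V] (f : Module.End ℂ V) (c : ℂ)
    (h : f.maxGenEigenspace c = ⊤) : IsNilpotent (f - c • 1) := by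
  refine ⟨Module.finrank ℂ V, ?_⟩
  rw [Module.End.maxGenEigenspace_eq_genEigenspace_finrank, Module.End.genEigenspace_nat] at h
  exact LinearMap.ker_eq_top.mp h

lemma caseB (V : Type) [AddCommGroup V] [Module ℂ V] [FiniteDimensional ℂ V]
    (f g : Module.End ℂ V) (hc : f * g = g * f)
    (c d : ℂ) (hcf : IsNilpotent (f - c • 1)) (hdg : IsNilpotent (g - d • 1)) :
    Good V f g := by
  set a := f - c • (1 : Module.End ℂ V) with ha
  set b := g - d • (1 : Module.End ℂ V) with hb
  have hab : Commute a b := by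
    have hfg : Commute f g := hc
    exact (hfg.sub_right ((Commute.one_right f).smul_right d)).sub_left
      ((Commute.one_left g).smul_left c |>.sub_right
        (((Commute.one_right (1 : Module.End ℂ V)).smul_left c).smul_right d))
  have hkey : f * g - (c * d) • 1 = a * b + (d • a + c • b) := by
    rw [ha, hb]
    refine LinearMap.ext fun x => ?_
    simp only [LinearMap.sub_apply, LinearMap.add_apply, Module.End.mul_apply,
      LinearMap.smul_apply, Module.End.one_apply, map_sub, map_smul, smul_sub, smul_smul]
    module
  have hnil : IsNilpotent (f * g - (c * d) • 1) := by
    rw [hkey]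
    have h1 : IsNilpotent (a * b) := hab.isNilpotent_mul_right hcf
    have h2 : IsNilpotent (d • a) := hcf.smul d
    have h3 : IsNilpotent (c • b) := hdg.smul c
    have hcomm1 : Commute (d • a) (c • b) := (hab.smul_left d).smul_right c
    have hcomm2 : Commute (a * b) (d • a + c • b) :=
      (((Commute.refl a).mul_left hab.symm).smul_right d).add_right
        ((hab.mul_left (Commute.refl b)).smul_right c)
    exact hcomm2.isNilpotent_add h1 (hcomm1.isNilpotent_add h2 h3)
  refine ⟨Multiset.replicate (Module.finrank ℂ V) (c, d), by simp, ?_, ?_, ?_⟩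
  · rw [charpoly_of_isNilpotent_sub f c hcf, Multiset.map_replicate, Multiset.prod_replicate]
  · rw [charpoly_of_isNilpotent_sub g d hdg, Multiset.map_replicate, Multiset.prod_replicate]
  · rw [charpoly_of_isNilpotent_sub (f * g) (c * d) hnil, Multiset.map_replicate,
      Multiset.prod_replicate]

lemma nilpotent_shift_of_trichotomy [FiniteDimensional ℂ V] [Nontrivial V] (f : Module.End ℂ V)
    (hf : ∀ μ : ℂ, f.maxGenEigenspace μ ≠ ⊥ → f.maxGenEigenspace μ = ⊤) :
    ∃ c : ℂ, IsNilpotent (f - c • 1) := by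
  obtain ⟨c, hcev⟩ := Module.End.exists_eigenvalue f
  have hne : f.maxGenEigenspace c ≠ ⊥ := by
    intro h
    apply hcev
    rw [← le_bot_iff, ← h]
    simpa using (f.genEigenspace c).monotone (le_top : (1 : ℕ∞) ≤ ⊤)
  exact ⟨c, isNilpotent_of_maxGenEigenspace_eq_top f c (hf c hne)⟩

lemma charpoly_eq_one_of_finrank_zero [FiniteDimensional ℂ V] (f : Module.End ℂ V)
    (h : Module.finrank ℂ V = 0) : f.charpoly = 1 :=
  (Polynomial.Monic.natDegree_eq_zero f.charpoly_monic).mp (f.charpoly_natDegree.trans h)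

lemma good_of_commute : ∀ (n : ℕ) (V : Type) [AddCommGroup V] [Module ℂ V]
    [FiniteDimensional ℂ V], Module.finrank ℂ V = n →
    ∀ f g : Module.End ℂ V, f * g = g * f → Good V f g := by
  intro n
  induction n using Nat.strong_induction_on with
  | _ n ih =>
    intro V _ _ _ hn f g hc
    rcases Nat.eq_zero_or_pos n with h0 | hpos
    · have hd : Module.finrank ℂ V = 0 := hn.trans h0
      exact ⟨0, by simp [hd], by simp [charpoly_eq_one_of_finrank_zero _ hd],
        by simp [charpoly_eq_one_of_finrank_zero _ hd],
        by simp [charpoly_eq_one_of_finrank_zero _ hd]⟩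
    · have : Nontrivial V := by
        apply Module.nontrivial_of_finrank_pos (R := ℂ)
        omega
      by_cases hf : ∃ μ, f.maxGenEigenspace μ ≠ ⊥ ∧ f.maxGenEigenspace μ ≠ ⊤
      · obtain ⟨μ, h1, h2⟩ := hf
        exact caseA n ih V hn f g hc μ h1 h2
      · by_cases hg : ∃ μ, g.maxGenEigenspace μ ≠ ⊥ ∧ g.maxGenEigenspace μ ≠ ⊤
        · obtain ⟨μ, h1, h2⟩ := hg
          exact Good.swap hc (caseA n ih V hn g f hc.symm μ h1 h2)
        · push_neg at hf hg
          obtain ⟨c, hcf⟩ := nilpotent_shift_of_trichotomy f hf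
          obtain ⟨d, hdg⟩ := nilpotent_shift_of_trichotomy g hg
          exact caseB V f g hc c d hcf hdg

lemma multiset_to_fin {α M : Type*} [CommMonoid M] (s : Multiset α) {N : ℕ}
    (hs : Multiset.card s = N) :
    ∃ r : Fin N → α, ∀ F : α → M, (s.map F).prod = ∏ i, F (r i) := by
  obtain ⟨l, rfl⟩ : ∃ l : List α, (l : Multiset α) = s := ⟨s.toList, s.coe_toList⟩
  rw [Multiset.coe_card] at hs
  subst hs
  refine ⟨l.get, fun F => ?_⟩
  rw [← List.prod_ofFn, show (List.ofFn fun i => F (l.get i)) = l.map F by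
    rw [show (fun i => F (l.get i)) = F ∘ l.get from rfl, ← List.map_ofFn, List.ofFn_get]]
  simp

end CharpolyTranslationAux

/-- On a finite-dimensional translation-invariant subspace `V` of functions `ℝ^d → ℂ`,
the eigenvalues of the translation operators can be arranged so that the eigenvalues of
`T_{y+z}` are the products of the corresponding eigenvalues of `T_y` and `T_z`. -/
theorem charpoly_translation_add
    (d : ℕ) (hd : 1 ≤ d)
    (V : Submodule ℂ (EuclideanSpace ℝ (Fin d) → ℂ)) [FiniteDimensional ℂ V]
    (htrans : ∀ (h : EuclideanSpace ℝ (Fin d)) (g : EuclideanSpace ℝ (Fin d) → ℂ),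
      g ∈ V → (fun x => g (x + h)) ∈ V)
    (T : EuclideanSpace ℝ (Fin d) → (V →ₗ[ℂ] V))
    (hT : ∀ (y : EuclideanSpace ℝ (Fin d)) (g : V) (x : EuclideanSpace ℝ (Fin d)),
      (T y g : EuclideanSpace ℝ (Fin d) → ℂ) x
        = (g : EuclideanSpace ℝ (Fin d) → ℂ) (x + y)) :
    ∀ y z : EuclideanSpace ℝ (Fin d),
      ∃ lam mu : Fin (Module.finrank ℂ V) → ℂ,
        (T y).charpoly = ∏ i, (Polynomial.X - Polynomial.C (lam i)) ∧
        (T z).charpoly = ∏ i, (Polynomial.X - Polynomial.C (mu i)) ∧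
        (T (y + z)).charpoly = ∏ i, (Polynomial.X - Polynomial.C (lam i * mu i)) := by
  intro y z
  have hmul : ∀ u v : EuclideanSpace ℝ (Fin d), T (u + v) = T u * T v := by
    intro u v
    refine LinearMap.ext fun g => Subtype.ext (funext fun x => ?_)
    rw [hT (u + v) g x]
    have : ((T u * T v) g : EuclideanSpace ℝ (Fin d) → ℂ) x
        = (T v g : EuclideanSpace ℝ (Fin d) → ℂ) (x + u) := hT u (T v g) x
    rw [Module.End.mul_apply] at this ⊢
    rw [this, hT v g (x + u), add_assoc]
  have hc : T y * T z = T z * T y := by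
    rw [← hmul, ← hmul, add_comm]
  obtain ⟨s, hcard, h1, h2, h3⟩ :=
    CharpolyTranslationAux.good_of_commute (Module.finrank ℂ V) V rfl (T y) (T z) hc
  obtain ⟨r, hr⟩ := CharpolyTranslationAux.multiset_to_fin (M := Polynomial ℂ) s hcard
  refine ⟨fun i => (r i).1, fun i => (r i).2, ?_, ?_, ?_⟩
  · rw [h1, hr]
  · rw [h2, hr]
  · rw [hmul y z, h3, hr]
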